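/- Let b ≥ 6 be a real number and write {b} := b − ⌊b⌋. Then: d(a,b) ≥ √(a/(2b)) for all a ≥ 1; d(a,b) ≥ 1 for all a ∈ [1, b + ⌊b⌋]; and for every integer k with 0 ≤ k < √(2b) + {b}, one has d(a,b) ≥ a/(b + ⌊b⌋ + k) for all a ∈ [α_k, 2(⌊b⌋+k)+1] and d(a,b) ≥ (2(⌊b⌋+k)+1)/(b + ⌊b⌋ + k) for all a ∈ [2(⌊b⌋+k)+1, β_k], where α_0 := b + ⌊b⌋, α_1 := (b + ⌊b⌋ + 1)(2⌊b⌋ + 1)/(b + ⌊b⌋), α_k := (b + ⌊b⌋ + k)²/(2b) for k ≥ 2, and β_k := 2b·((2(⌊b⌋+k)+1)/(b + ⌊b⌋ + k))² for k ≥ 1. -/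

import Mathlib

/-- `Nseq a b k` is the `k`-th term (indexed from 0) of the nondecreasing sequence listing,
with multiplicities, all numbers `m*a + n*b` with `m n : ℕ`; equivalently the least `t ≥ 0`
such that there are at least `k+1` pairs `(m,n)` with `m*a + n*b ≤ t`. -/
noncomputable def Nseq (a b : ℝ) (k : ℕ) : ℝ :=
  sInf {t : ℝ | 0 ≤ t ∧ k + 1 ≤ {p : ℕ × ℕ | (p.1 : ℝ) * a + (p.2 : ℝ) * b ≤ t}.ncard}

/-- `Mseq c d k = min {m*c + n*d : (m+1)*(n+1) ≥ k+1}`. -/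
noncomputable def Mseq (c d : ℝ) (k : ℕ) : ℝ :=
  sInf {t : ℝ | ∃ m n : ℕ, k + 1 ≤ (m + 1) * (n + 1) ∧ t = (m : ℝ) * c + (n : ℝ) * d}

/-- `dFun a b = inf {λ > 0 : N_k(1,a) ≤ λ M_k(1,b) for all k}`. -/
noncomputable def dFun (a b : ℝ) : ℝ :=
  sInf {l : ℝ | 0 < l ∧ ∀ k : ℕ, Nseq 1 a k ≤ l * Mseq 1 b k}

/-- The left endpoints `α_k` for the conjectural staircase with parameter `b`. -/
noncomputable def alphB (b : ℝ) : ℕ → ℝ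
  | 0 => b + (⌊b⌋ : ℝ)
  | 1 => (b + (⌊b⌋ : ℝ) + 1) * (2 * (⌊b⌋ : ℝ) + 1) / (b + (⌊b⌋ : ℝ))
  | k => (b + (⌊b⌋ : ℝ) + (k : ℝ)) ^ 2 / (2 * b)

/-- The right endpoints `β_k` for the conjectural staircase with parameter `b`. -/
noncomputable def betB (b : ℝ) : ℕ → ℝ
  | 0 => (b + (⌊b⌋ : ℝ) + 1) * (2 * (⌊b⌋ : ℝ) + 1) / (b + (⌊b⌋ : ℝ))
  | k => 2 * b * ((2 * ((⌊b⌋ : ℝ) + (k : ℝ)) + 1) / (b + (⌊b⌋ : ℝ) + (k : ℝ))) ^ 2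


open Finset in
private lemma nsetFinite {a : ℝ} (ha : 1 ≤ a) (t : ℝ) :
    {p : ℕ × ℕ | (p.1 : ℝ) * 1 + (p.2 : ℝ) * a ≤ t}.Finite := by
  apply Set.Finite.subset ((Finset.range (⌊t⌋₊ + 1) ×ˢ Finset.range (⌊t⌋₊ + 1)).finite_toSet)
  rintro ⟨m, n⟩ hp
  simp only [Set.mem_setOf_eq] at hp
  have hm : (m : ℝ) ≤ t := by nlinarith [Nat.cast_nonneg (α := ℝ) m, Nat.cast_nonneg (α := ℝ) n]
  have hn : (n : ℝ) ≤ t := by nlinarith [Nat.cast_nonneg (α := ℝ) m, Nat.cast_nonneg (α := ℝ) n]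
  simp only [Finset.coe_product, Set.mem_prod, Finset.mem_coe, Finset.mem_range,
    Nat.lt_succ_iff]
  exact ⟨Nat.le_floor hm, Nat.le_floor hn⟩

private lemma nmem {a : ℝ} (ha : 1 ≤ a) {k M N : ℕ} (h : k + 1 ≤ (M + 1) * (N + 1)) :
    ((M : ℝ) + (N : ℝ) * a) ∈
      {t : ℝ | 0 ≤ t ∧ k + 1 ≤ {p : ℕ × ℕ | (p.1 : ℝ) * 1 + (p.2 : ℝ) * a ≤ t}.ncard} := by
  constructor
  · positivity
  · calc k + 1 ≤ (M + 1) * (N + 1) := h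
      _ = ((Finset.range (M+1) ×ˢ Finset.range (N+1) : Finset (ℕ × ℕ)) : Set (ℕ × ℕ)).ncard := by
          rw [Set.ncard_coe_finset, Finset.card_product, Finset.card_range, Finset.card_range]
      _ ≤ _ := by
          apply Set.ncard_le_ncard _ (nsetFinite ha _)
          rintro ⟨m, n⟩ hp
          simp only [Finset.coe_product, Set.mem_prod, Finset.mem_coe, Finset.mem_range,
            Nat.lt_succ_iff] at hp
          simp only [Set.mem_setOf_eq]
          have h1 : (m : ℝ) ≤ M := Nat.cast_le.mpr hp.1
          have h2 : (n : ℝ) ≤ N := Nat.cast_le.mpr hp.2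
          nlinarith [Nat.cast_nonneg (α := ℝ) n]

private lemma nseq_le {a : ℝ} (ha : 1 ≤ a) {k M N : ℕ} (h : k + 1 ≤ (M + 1) * (N + 1)) :
    Nseq 1 a k ≤ (M : ℝ) + (N : ℝ) * a := by
  apply csInf_le ⟨0, fun t ht => ht.1⟩
  simpa [Nseq] using nmem ha h

private lemma nseq_ge {a : ℝ} (ha : 1 ≤ a) {k : ℕ} {c : ℝ}
    (h : ∀ s : ℝ, 0 ≤ s →
      k + 1 ≤ {p : ℕ × ℕ | (p.1 : ℝ) * 1 + (p.2 : ℝ) * a ≤ s}.ncard → c ≤ s) :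
    c ≤ Nseq 1 a k := by
  apply le_csInf ⟨(k : ℝ) + (0 : ℕ) * a, nmem ha (by simp)⟩
  rintro t ⟨ht0, htc⟩
  exact h t ht0 htc

open Finset in
private lemma count_le {a s : ℝ} (ha : 1 ≤ a) (hs : 0 ≤ s) :
    2 * a * (({p : ℕ × ℕ | (p.1 : ℝ) * 1 + (p.2 : ℝ) * a ≤ s}.ncard : ℝ)) ≤ (s + a + 1) ^ 2 := by
  classical
  have ha0 : (0 : ℝ) < a := by linarith
  have hfin := nsetFinite ha s
  set F := hfin.toFinset with hF
  set N : ℕ := ⌊s / a⌋₊ with hN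
  have hmemF : ∀ p : ℕ × ℕ, p ∈ F ↔ (p.1 : ℝ) * 1 + (p.2 : ℝ) * a ≤ s := by
    intro p; rw [hF, Set.Finite.mem_toFinset]; rfl
  have hsnd : ∀ p ∈ F, p.2 ∈ Finset.range (N + 1) := by
    rintro ⟨m, n⟩ hp
    rw [hmemF] at hp
    have h1 : (n : ℝ) * a ≤ s := by nlinarith [Nat.cast_nonneg (α := ℝ) m]
    have h2 : (n : ℝ) ≤ s / a := (le_div_iff₀ ha0).mpr h1
    simpa [Nat.lt_succ_iff] using Nat.le_floor h2
  have hcard : F.card = ∑ n ∈ Finset.range (N + 1), (F.filter fun p => p.2 = n).card :=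
    Finset.card_eq_sum_card_fiberwise hsnd
  have hfiber : ∀ n ∈ Finset.range (N + 1),
      ((F.filter fun p => p.2 = n).card : ℝ) ≤ s - (n : ℝ) * a + 1 := by
    intro n hn
    have hna : (n : ℝ) * a ≤ s := by
      have : (n : ℝ) ≤ s / a := by
        have : n ≤ N := Nat.lt_succ_iff.mp (Finset.mem_range.mp hn)
        calc (n : ℝ) ≤ N := Nat.cast_le.mpr this
          _ ≤ s / a := Nat.floor_le (by positivity)
      exact (le_div_iff₀ ha0).mp this
    have hle : (F.filter fun p => p.2 = n).card ≤ (Finset.range (⌊s - (n:ℝ)*a⌋₊ + 1)).card := by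
      apply Finset.card_le_card_of_injOn Prod.fst
      · rintro ⟨m, n'⟩ hp
        simp only [Finset.mem_coe, Finset.mem_filter] at hp
        obtain ⟨hp1, rfl⟩ := hp
        rw [hmemF] at hp1
        have : (m : ℝ) ≤ s - (n' : ℝ) * a := by linarith
        simpa [Nat.lt_succ_iff] using Nat.le_floor this
      · rintro ⟨m1, n1⟩ hp1 ⟨m2, n2⟩ hp2 hfst
        simp only [Finset.coe_filter, Set.mem_setOf_eq] at hp1 hp2
        simp only at hfst
        simp [Prod.ext_iff, hfst, hp1.2, hp2.2]
    calc ((F.filter fun p => p.2 = n).card : ℝ) ≤ ((⌊s - (n:ℝ)*a⌋₊ + 1 : ℕ) : ℝ) := by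
          exact Nat.cast_le.mpr (by simpa using hle)
      _ ≤ s - (n : ℝ) * a + 1 := by
          push_cast
          have := Nat.floor_le (by linarith : (0:ℝ) ≤ s - (n:ℝ)*a)
          linarith
  have hsum : ((F.card : ℝ)) ≤ ∑ n ∈ Finset.range (N + 1), (s - (n : ℝ) * a + 1) := by
    rw [hcard]
    push_cast
    exact Finset.sum_le_sum hfiber
  have hgauss : (∑ n ∈ Finset.range (N + 1), (n : ℝ)) = (N : ℝ) * (N + 1) / 2 := by
    have h2 := Finset.sum_range_id_mul_two (N + 1)
    have : ((∑ i ∈ Finset.range (N + 1), i : ℕ) : ℝ) * 2 = ((N + 1) * N : ℕ) := by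
      exact_mod_cast congrArg (Nat.cast : ℕ → ℝ) h2
    push_cast at this ⊢
    linarith
  have hsum2 : (∑ n ∈ Finset.range (N + 1), (s - (n : ℝ) * a + 1)) =
      ((N : ℝ) + 1) * (s + 1) - a * ((N : ℝ) * (N + 1) / 2) := by
    have : ∀ n ∈ Finset.range (N+1), (s - (n:ℝ) * a + 1) = (s+1) - (n:ℝ) * a := by
      intro n _; ring
    rw [Finset.sum_congr rfl this, Finset.sum_sub_distrib, ← Finset.sum_mul, hgauss,
      Finset.sum_const, Finset.card_range]
    push_cast
    ring
  have hncard : ({p : ℕ × ℕ | (p.1 : ℝ) * 1 + (p.2 : ℝ) * a ≤ s}.ncard : ℝ) = (F.card : ℝ) := by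
    rw [Set.ncard_eq_toFinset_card _ hfin]
  rw [hncard]
  have hfinal : ((N : ℝ) + 1) * (s + 1) - a * ((N : ℝ) * (N + 1) / 2) ≤ (s + a + 1)^2 / (2 * a) := by
    have hx : (0 : ℝ) ≤ (N : ℝ) := Nat.cast_nonneg N
    rw [le_div_iff₀ (by positivity)]
    nlinarith [sq_nonneg (a * (N : ℝ) - s - 1 + a / 2), mul_nonneg ha0.le hs]
  have : ((F.card : ℝ)) ≤ (s + a + 1)^2 / (2 * a) := by
    rw [hsum2] at hsum; linarith
  calc 2 * a * (F.card : ℝ) ≤ 2 * a * ((s + a + 1)^2 / (2*a)) := by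
        apply mul_le_mul_of_nonneg_left this (by positivity)
    _ = (s + a + 1)^2 := by field_simp

private lemma nseq_ge_sqrt {a : ℝ} (ha : 1 ≤ a) (k : ℕ) :
    Real.sqrt (2 * a * k) - a - 1 ≤ Nseq 1 a k := by
  set t : ℝ := Real.sqrt (2 * a * k) - a - 1 with ht
  have hN0 : (0 : ℝ) ≤ Nseq 1 a k := nseq_ge ha (fun s hs _ => hs)
  rcases le_or_gt t 0 with h | h
  · linarith
  · apply nseq_ge ha
    intro s hs hcount
    by_contra hcon
    push_neg at hcon
    have h1 : 2 * a * (({p : ℕ × ℕ | (p.1 : ℝ) * 1 + (p.2 : ℝ) * a ≤ s}.ncard : ℝ)) ≤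
        (s + a + 1) ^ 2 := count_le ha hs
    have h2 : (k + 1 : ℝ) ≤ ({p : ℕ × ℕ | (p.1 : ℝ) * 1 + (p.2 : ℝ) * a ≤ s}.ncard : ℝ) := by
      exact_mod_cast hcount
    have h3 : (s + a + 1) ^ 2 < (t + a + 1) ^ 2 := by nlinarith
    have h4 : (t + a + 1) ^ 2 = 2 * a * k := by
      have : t + a + 1 = Real.sqrt (2 * a * k) := by rw [ht]; ring
      rw [this, Real.sq_sqrt (by positivity)]
    nlinarith

private lemma mseq_le {b : ℝ} (hb : 0 ≤ b) {k m n : ℕ} (h : k + 1 ≤ (m + 1) * (n + 1)) :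
    Mseq 1 b k ≤ (m : ℝ) * 1 + (n : ℝ) * b := by
  apply csInf_le
  · refine ⟨0, ?_⟩
    rintro t ⟨m', n', _, rfl⟩
    positivity
  · exact ⟨m, n, h, rfl⟩

private lemma mseq_ge {b : ℝ} {k : ℕ} {c : ℝ}
    (h : ∀ m n : ℕ, k + 1 ≤ (m + 1) * (n + 1) → c ≤ (m : ℝ) * 1 + (n : ℝ) * b) :
    c ≤ Mseq 1 b k := by
  apply le_csInf
  · exact ⟨(k : ℝ) * 1 + ((0 : ℕ) : ℝ) * b, k, 0, by simp, rfl⟩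
  · rintro t ⟨m, n, hmn, rfl⟩
    exact h m n hmn

private lemma mseq_le_sqrt {b : ℝ} (hb : 1 ≤ b) (k : ℕ) :
    Mseq 1 b k ≤ 2 * Real.sqrt (b * (k + 1)) := by
  have hb0 : (0 : ℝ) < b := by linarith
  set K : ℝ := (k : ℝ) + 1 with hK
  have hK1 : (1 : ℝ) ≤ K := by rw [hK]; linarith [Nat.cast_nonneg (α := ℝ) k]
  have hKpos : (0 : ℝ) < K := by linarith
  set x : ℝ := Real.sqrt (K / b) with hx
  have hxpos : 0 < x := Real.sqrt_pos.mpr (by positivity)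
  set n : ℕ := ⌊x⌋₊ with hn
  have hn1 : x < (n : ℝ) + 1 := Nat.lt_floor_add_one x
  have hn2 : (n : ℝ) ≤ x := Nat.floor_le hxpos.le
  have hnn : (0 : ℝ) < (n : ℝ) + 1 := by positivity
  set M1 : ℕ := ⌈K / ((n : ℝ) + 1)⌉₊ with hM1
  have hM1pos : 1 ≤ M1 := by
    rw [hM1, Nat.one_le_ceil_iff]
    positivity
  set m : ℕ := M1 - 1 with hm
  have hm1n : m + 1 = M1 := Nat.sub_add_cancel hM1pos
  have hm1 : (m : ℝ) + 1 = (M1 : ℝ) := by exact_mod_cast congrArg (Nat.cast : ℕ → ℝ) hm1n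
  have hub : K / ((n : ℝ) + 1) ≤ (M1 : ℝ) := Nat.le_ceil _
  have hlt : (M1 : ℝ) < K / ((n : ℝ) + 1) + 1 := Nat.ceil_lt_add_one (by positivity)
  have hprod : k + 1 ≤ (m + 1) * (n + 1) := by
    have : (K : ℝ) ≤ ((m : ℝ) + 1) * ((n : ℝ) + 1) := by
      rw [hm1]
      calc (K : ℝ) = K / ((n : ℝ) + 1) * ((n : ℝ) + 1) := by field_simp
        _ ≤ (M1 : ℝ) * ((n : ℝ) + 1) := by
            apply mul_le_mul_of_nonneg_right hub hnn.le
    have h6 : ((k : ℝ) + 1) ≤ ((m : ℝ) + 1) * ((n : ℝ) + 1) := by rw [← hK]; exact this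
    exact_mod_cast h6
  have hxs : x * Real.sqrt (b * K) = K := by
    rw [hx, ← Real.sqrt_mul (by positivity : (0:ℝ) ≤ K / b)]
    rw [show K / b * (b * K) = K ^ 2 by field_simp]
    exact Real.sqrt_sq hKpos.le
  have hKx : K / x = Real.sqrt (b * K) := by
    rw [div_eq_iff hxpos.ne']
    linarith [hxs]
  have hxb : x * b = Real.sqrt (b * K) := by
    have h1 : (x * b) ^ 2 = b * K := by
      rw [mul_pow, hx, Real.sq_sqrt (by positivity : (0:ℝ) ≤ K / b)]
      field_simp
    have h2 : Real.sqrt ((x * b) ^ 2) = x * b := Real.sqrt_sq (by positivity)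
    rw [← h1, h2]
  have hmv : (m : ℝ) ≤ Real.sqrt (b * K) := by
    have h1 : (m : ℝ) ≤ K / ((n : ℝ) + 1) := by linarith
    have h2 : K / ((n : ℝ) + 1) ≤ K / x :=
      div_le_div_of_nonneg_left hKpos.le hxpos hn1.le
    linarith [hKx]
  have hnv : (n : ℝ) * b ≤ Real.sqrt (b * K) := by
    have : (n : ℝ) * b ≤ x * b := mul_le_mul_of_nonneg_right hn2 hb0.le
    linarith [hxb]
  calc Mseq 1 b k ≤ (m : ℝ) * 1 + (n : ℝ) * b := mseq_le hb0.le hprod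
    _ ≤ 2 * Real.sqrt (b * K) := by linarith
    _ = 2 * Real.sqrt (b * ((k : ℝ) + 1)) := by rw [hK]

private lemma dset_nonempty {a b : ℝ} (ha : 1 ≤ a) (hb : 1 ≤ b) :
    {l : ℝ | 0 < l ∧ ∀ k : ℕ, Nseq 1 a k ≤ l * Mseq 1 b k}.Nonempty := by
  refine ⟨1 + a, by linarith, fun k => ?_⟩
  rcases Nat.eq_zero_or_pos k with rfl | hk
  · have h1 : Nseq 1 a 0 ≤ ((0:ℕ) : ℝ) + ((0:ℕ) : ℝ) * a := nseq_le ha (by norm_num)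
    have h2 : (0 : ℝ) ≤ Mseq 1 b 0 := mseq_ge (fun m n _ => by positivity)
    have h3 : (0:ℝ) ≤ (1 + a) * Mseq 1 b 0 := by nlinarith
    simp only [Nat.cast_zero] at h1
    linarith
  · set s : ℕ := Nat.sqrt k with hs
    have hs1 : k + 1 ≤ (s + 1) * (s + 1) := Nat.lt_succ_sqrt k
    have h1 : Nseq 1 a k ≤ (s : ℝ) + (s : ℝ) * a := nseq_le ha hs1
    have h2 : (s : ℝ) ≤ Mseq 1 b k := by
      apply mseq_ge
      intro m n hmn
      have hmax : s ≤ m ∨ s ≤ n := by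
        by_contra hcon
        push_neg at hcon
        have h3 : (m + 1) * (n + 1) ≤ s * s := Nat.mul_le_mul hcon.1 hcon.2
        have h4 : s * s ≤ k := by
          have := Nat.sqrt_le' k
          simpa [hs, pow_two] using this
        omega
      rcases hmax with h | h
      · have : (s : ℝ) ≤ (m : ℝ) := Nat.cast_le.mpr h
        nlinarith [Nat.cast_nonneg (α := ℝ) n]
      · have : (s : ℝ) ≤ (n : ℝ) := Nat.cast_le.mpr h
        nlinarith [Nat.cast_nonneg (α := ℝ) m, Nat.cast_nonneg (α := ℝ) n]
    calc Nseq 1 a k ≤ (s : ℝ) + (s : ℝ) * a := h1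
      _ = (1 + a) * (s : ℝ) := by ring
      _ ≤ (1 + a) * Mseq 1 b k := by
          apply mul_le_mul_of_nonneg_left h2 (by linarith)

private lemma alphB_ge_one {b : ℝ} (hb : 6 ≤ b) (k : ℕ) : 1 ≤ alphB b k := by
  have hL : (b : ℝ) - 1 < (⌊b⌋ : ℝ) := Int.sub_one_lt_floor b
  have hL' : (⌊b⌋ : ℝ) ≤ b := Int.floor_le b
  match k with
  | 0 => show (1:ℝ) ≤ b + (⌊b⌋ : ℝ); linarith
  | 1 =>
    show (1:ℝ) ≤ (b + (⌊b⌋ : ℝ) + 1) * (2 * (⌊b⌋ : ℝ) + 1) / (b + (⌊b⌋ : ℝ))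
    rw [le_div_iff₀ (by linarith)]
    nlinarith
  | (n+2) =>
    show (1:ℝ) ≤ (b + (⌊b⌋ : ℝ) + ((n+2 : ℕ) : ℝ)) ^ 2 / (2 * b)
    rw [le_div_iff₀ (by linarith)]
    have : (0:ℝ) ≤ ((n+2 : ℕ) : ℝ) := Nat.cast_nonneg _
    nlinarith

private lemma partC_key {a b : ℝ} (ha : 1 ≤ a) (hb : 6 ≤ b) (k : ℕ) {l : ℝ}
    (hl : 0 < l) (hlk : ∀ j : ℕ, Nseq 1 a j ≤ l * Mseq 1 b j) :
    min a (2 * ((⌊b⌋ : ℝ) + (k : ℝ)) + 1) ≤ l * (b + (⌊b⌋ : ℝ) + (k : ℝ)) := by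
  set L : ℕ := ⌊b⌋.toNat with hL
  have hLcast : (L : ℝ) = (⌊b⌋ : ℝ) := by
    rw [hL]
    exact_mod_cast congrArg (Int.cast : ℤ → ℝ)
      (Int.toNat_of_nonneg (Int.floor_nonneg.mpr (by linarith)))
  set j : ℕ := 2 * (L + k) + 1 with hj
  have hjcast : (j : ℝ) = 2 * ((⌊b⌋ : ℝ) + (k : ℝ)) + 1 := by
    rw [hj]; push_cast [hLcast]; ring
  have hM : Mseq 1 b j ≤ b + (⌊b⌋ : ℝ) + (k : ℝ) := by
    have h1 : j + 1 ≤ (L + k + 1) * (1 + 1) := by omega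
    have h2 := mseq_le (b := b) (by linarith) h1
    have : ((L + k : ℕ) : ℝ) * 1 + ((1:ℕ) : ℝ) * b = b + (⌊b⌋ : ℝ) + (k : ℝ) := by
      push_cast [hLcast]; ring
    rwa [this] at h2
  have hN : min a (2 * ((⌊b⌋ : ℝ) + (k : ℝ)) + 1) ≤ Nseq 1 a j := by
    apply nseq_ge ha
    intro s hs hcount
    by_contra hcon
    push_neg at hcon
    rw [lt_min_iff] at hcon
    obtain ⟨hsa, hsj⟩ := hcon
    rw [← hjcast] at hsj
    have hsub : {p : ℕ × ℕ | (p.1 : ℝ) * 1 + (p.2 : ℝ) * a ≤ s} ⊆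
        ((Finset.range j ×ˢ Finset.range 1 : Finset (ℕ × ℕ)) : Set (ℕ × ℕ)) := by
      rintro ⟨m, n⟩ hp
      simp only [Set.mem_setOf_eq] at hp
      have hn : n = 0 := by
        by_contra hn0
        have h1 : (1 : ℝ) ≤ (n : ℝ) := by exact_mod_cast Nat.one_le_iff_ne_zero.mpr hn0
        nlinarith [Nat.cast_nonneg (α := ℝ) m]
      subst hn
      have hm : (m : ℝ) < (j : ℝ) := by
        simp only [Nat.cast_zero, zero_mul, add_zero, mul_one] at hp
        linarith
      simp only [Finset.coe_product, Set.mem_prod, Finset.mem_coe, Finset.mem_range]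
      exact ⟨by exact_mod_cast hm, Nat.lt_one_iff.mpr rfl⟩
    have hcard : {p : ℕ × ℕ | (p.1 : ℝ) * 1 + (p.2 : ℝ) * a ≤ s}.ncard ≤ j := by
      have := Set.ncard_le_ncard hsub (Finset.finite_toSet _)
      rwa [Set.ncard_coe_finset, Finset.card_product, Finset.card_range, Finset.card_range,
        mul_one] at this
    omega
  calc min a (2 * ((⌊b⌋ : ℝ) + (k : ℝ)) + 1) ≤ Nseq 1 a j := hN
    _ ≤ l * Mseq 1 b j := hlk j
    _ ≤ l * (b + (⌊b⌋ : ℝ) + (k : ℝ)) := mul_le_mul_of_nonneg_left hM hl.le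

theorem staircase_lower_bounds (b : ℝ) (hb : 6 ≤ b) :
    (∀ a : ℝ, 1 ≤ a → Real.sqrt (a / (2 * b)) ≤ dFun a b) ∧
    (∀ a ∈ Set.Icc (1 : ℝ) (b + (⌊b⌋ : ℝ)), 1 ≤ dFun a b) ∧
    (∀ k : ℕ, (k : ℝ) < Real.sqrt (2 * b) + Int.fract b →
      (∀ a ∈ Set.Icc (alphB b k) (2 * ((⌊b⌋ : ℝ) + (k : ℝ)) + 1),
        a / (b + (⌊b⌋ : ℝ) + (k : ℝ)) ≤ dFun a b) ∧
      (∀ a ∈ Set.Icc (2 * ((⌊b⌋ : ℝ) + (k : ℝ)) + 1) (betB b k),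
        (2 * ((⌊b⌋ : ℝ) + (k : ℝ)) + 1) / (b + (⌊b⌋ : ℝ) + (k : ℝ)) ≤ dFun a b)) := by
  have hb1 : (1 : ℝ) ≤ b := by linarith
  have hLlow : (b : ℝ) - 1 < (⌊b⌋ : ℝ) := Int.sub_one_lt_floor b
  have hLup : (⌊b⌋ : ℝ) ≤ b := Int.floor_le b
  refine ⟨?_, ?_, ?_⟩
  · -- volume bound
    intro a ha
    unfold dFun
    apply le_csInf (dset_nonempty ha hb1)
    rintro l ⟨hl0, hlk⟩
    set d : ℝ := Real.sqrt (2 * a) - 2 * l * Real.sqrt b with hd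
    set C : ℝ := 2 * l * Real.sqrt b + a + 1 with hC
    have key : ∀ k : ℕ, Real.sqrt k * d ≤ C := by
      intro k
      have h1 : Real.sqrt (2 * a * k) - a - 1 ≤ Nseq 1 a k := nseq_ge_sqrt ha k
      have e4 : Real.sqrt (2 * a * k) = Real.sqrt (2 * a) * Real.sqrt k :=
        Real.sqrt_mul (by linarith) _
      rw [e4] at h1
      have h2 : Nseq 1 a k ≤ l * Mseq 1 b k := hlk k
      have h3 : Mseq 1 b k ≤ 2 * Real.sqrt (b * ((k : ℝ) + 1)) := by
        exact_mod_cast mseq_le_sqrt hb1 k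
      have h4 : l * Mseq 1 b k ≤ l * (2 * Real.sqrt (b * ((k : ℝ) + 1))) :=
        mul_le_mul_of_nonneg_left h3 hl0.le
      have h5 : Real.sqrt (b * ((k : ℝ) + 1)) ≤ Real.sqrt b * Real.sqrt k + Real.sqrt b := by
        have e1 : Real.sqrt (b * k) ^ 2 = b * k := Real.sq_sqrt (by positivity)
        have e2 : Real.sqrt b ^ 2 = b := Real.sq_sqrt (by linarith)
        have e5 : Real.sqrt (b * k) = Real.sqrt b * Real.sqrt k := Real.sqrt_mul (by linarith) _
        have e3 : b * ((k : ℝ) + 1) ≤ (Real.sqrt (b * k) + Real.sqrt b) ^ 2 := by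
          nlinarith [Real.sqrt_nonneg (b * k), Real.sqrt_nonneg b]
        calc Real.sqrt (b * ((k : ℝ) + 1))
            ≤ Real.sqrt ((Real.sqrt (b * k) + Real.sqrt b) ^ 2) := Real.sqrt_le_sqrt e3
          _ = Real.sqrt (b * k) + Real.sqrt b := Real.sqrt_sq (by positivity)
          _ = Real.sqrt b * Real.sqrt k + Real.sqrt b := by rw [e5]
      have h6 : l * (2 * Real.sqrt (b * ((k : ℝ) + 1))) ≤
          2 * l * (Real.sqrt b * Real.sqrt k) + 2 * l * Real.sqrt b := by
        nlinarith [mul_le_mul_of_nonneg_left h5 (by positivity : (0:ℝ) ≤ 2 * l)]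
      rw [hd, hC]
      nlinarith [h1, h2, h4, h6]
    have hdle : d ≤ 0 := by
      by_contra hdpos
      push_neg at hdpos
      have hC0 : 0 < C := by rw [hC]; positivity
      obtain ⟨k, hkgt⟩ := exists_nat_gt ((C / d) ^ 2)
      have h8 : Real.sqrt ((C / d) ^ 2) < Real.sqrt k := Real.sqrt_lt_sqrt (sq_nonneg _) hkgt
      rw [Real.sqrt_sq_eq_abs] at h8
      have h9 : C / d < Real.sqrt k := lt_of_le_of_lt (le_abs_self _) h8
      have h10 : C < Real.sqrt k * d := by
        rw [div_lt_iff₀ hdpos] at h9; linarith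
      linarith [key k]
    have hsq : 2 * a ≤ 4 * l ^ 2 * b := by
      have e1 : Real.sqrt (2 * a) ^ 2 = 2 * a := Real.sq_sqrt (by linarith)
      have e2 : Real.sqrt b ^ 2 = b := Real.sq_sqrt (by linarith)
      have h11 : Real.sqrt (2 * a) ≤ 2 * l * Real.sqrt b := by rw [hd] at hdle; linarith
      nlinarith [Real.sqrt_nonneg (2 * a), Real.sqrt_nonneg b]
    have hdiv : a / (2 * b) ≤ l ^ 2 := by
      rw [div_le_iff₀ (by linarith)]
      nlinarith
    calc Real.sqrt (a / (2 * b)) ≤ Real.sqrt (l ^ 2) := Real.sqrt_le_sqrt hdiv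
      _ = l := Real.sqrt_sq hl0.le
  · -- Gromov bound
    rintro a ⟨ha1, _⟩
    unfold dFun
    apply le_csInf (dset_nonempty ha1 hb1)
    rintro l ⟨hl0, hlk⟩
    have hN : (1 : ℝ) ≤ Nseq 1 a 1 := by
      apply nseq_ge ha1
      intro s hs hcount
      by_contra hcon
      push_neg at hcon
      have hsub : {p : ℕ × ℕ | (p.1 : ℝ) * 1 + (p.2 : ℝ) * a ≤ s} ⊆ {((0:ℕ), (0:ℕ))} := by
        rintro ⟨m, n⟩ hp
        simp only [Set.mem_setOf_eq] at hp
        have hm : m = 0 := by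
          by_contra hm0
          have h1 : (1 : ℝ) ≤ (m : ℝ) := by exact_mod_cast Nat.one_le_iff_ne_zero.mpr hm0
          nlinarith [Nat.cast_nonneg (α := ℝ) n]
        have hn : n = 0 := by
          by_contra hn0
          have h1 : (1 : ℝ) ≤ (n : ℝ) := by exact_mod_cast Nat.one_le_iff_ne_zero.mpr hn0
          nlinarith [Nat.cast_nonneg (α := ℝ) m]
        simp [hm, hn]
      have hcard : {p : ℕ × ℕ | (p.1 : ℝ) * 1 + (p.2 : ℝ) * a ≤ s}.ncard ≤ 1 := by
        have := Set.ncard_le_ncard hsub (Set.finite_singleton _)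
        rwa [Set.ncard_singleton] at this
      omega
    have hM : Mseq 1 b 1 ≤ 1 := by
      have h2 := mseq_le (b := b) (k := 1) (m := 1) (n := 0) (by linarith) (by norm_num)
      norm_num at h2
      exact h2
    have := mul_le_mul_of_nonneg_left hM hl0.le
    calc (1 : ℝ) ≤ Nseq 1 a 1 := hN
      _ ≤ l * Mseq 1 b 1 := hlk 1
      _ ≤ l := by linarith
  · -- staircase steps
    intro k _
    have hD : (0 : ℝ) < b + (⌊b⌋ : ℝ) + (k : ℝ) := by
      have : (0:ℝ) ≤ (k : ℝ) := Nat.cast_nonneg k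
      linarith
    constructor
    · rintro a ⟨ha1, ha2⟩
      have ha1' : (1 : ℝ) ≤ a := le_trans (alphB_ge_one hb k) ha1
      unfold dFun
      apply le_csInf (dset_nonempty ha1' hb1)
      rintro l ⟨hl0, hlk⟩
      have := partC_key ha1' hb k hl0 hlk
      rw [min_eq_left ha2] at this
      rw [div_le_iff₀ hD]
      linarith
    · rintro a ⟨ha1, ha2⟩
      have hj1 : (1 : ℝ) ≤ 2 * ((⌊b⌋ : ℝ) + (k : ℝ)) + 1 := by
        have : (0:ℝ) ≤ (k : ℝ) := Nat.cast_nonneg k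
        linarith
      have ha1' : (1 : ℝ) ≤ a := le_trans hj1 ha1
      unfold dFun
      apply le_csInf (dset_nonempty ha1' hb1)
      rintro l ⟨hl0, hlk⟩
      have := partC_key ha1' hb k hl0 hlk
      rw [min_eq_right ha1] at this
      rw [div_le_iff₀ hD]
      linarith
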